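/- The dual cone of FW^n_k (with respect to the trace inner product on symmetric matrices) equals the set of symmetric n×n matrices X such that every k×k principal submatrix X_K, for K ⊆ {1,...,n} with |K| = k, is positive semidefinite. -/

import Mathlib

open Matrix

/-- `A` has factor width at most `k`: `A = V * Vᵀ` where every column of `V`
has at most `k` nonzero entries. -/
def HasFactorWidthLE {ι : Type*} [Fintype ι] (A : Matrix ι ι ℝ) (k : ℕ) : Prop :=
  ∃ (m : ℕ) (V : Matrix ι (Fin m) ℝ),
    A = V * Vᵀ ∧ ∀ j, {i | V i j ≠ 0}.ncard ≤ k

/-- The cone `FW^n_k` of psd `n × n` matrices of factor width at most `k`. -/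
def FW (n k : ℕ) : Set (Matrix (Fin n) (Fin n) ℝ) :=
  {A | A.PosSemidef ∧ HasFactorWidthLE A k}

/-- The principal submatrix of `A` indexed by the finite set `K`. -/
def principalSub {ι : Type*} (A : Matrix ι ι ℝ) (K : Finset ι) :
    Matrix K K ℝ :=
  A.submatrix (fun i => (i : ι)) (fun j => (j : ι))

/-- The cone `(FW^n_k)^*`: symmetric matrices all of whose `k × k` principal
submatrices are psd. -/
def FWdual (n k : ℕ) : Set (Matrix (Fin n) (Fin n) ℝ) :=
  {A | A.IsSymm ∧ ∀ K : Finset (Fin n), K.card = k → (principalSub A K).PosSemidef}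

/-- The dual cone (within symmetric matrices) with respect to the trace inner
product `⟨Y, X⟩ = trace (Y * Xᵀ)`. -/
def dualSet {n : ℕ} (C : Set (Matrix (Fin n) (Fin n) ℝ)) :
    Set (Matrix (Fin n) (Fin n) ℝ) :=
  {Y | Y.IsSymm ∧ ∀ X ∈ C, 0 ≤ (Y * Xᵀ).trace}

/-- `A` spans an extreme ray of the cone `C`. -/
def SpansExtremeRay {E : Type*} [AddCommMonoid E] [Module ℝ E]
    (C : Set E) (A : E) : Prop :=
  A ∈ C ∧ A ≠ 0 ∧ ∀ X Y, X ∈ C → Y ∈ C → A = X + Y →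
    ∃ a b : ℝ, 0 ≤ a ∧ 0 ≤ b ∧ X = a • A ∧ Y = b • A

/-- `p` is a sum of squares of `k`-nomials (polynomials with at most `k` monomials). -/
def IsSOkS {n : ℕ} (k : ℕ) (p : MvPolynomial (Fin n) ℝ) : Prop :=
  ∃ (m : ℕ) (q : Fin m → MvPolynomial (Fin n) ℝ),
    (∀ i, (q i).support.card ≤ k) ∧ p = ∑ i, (q i) ^ 2

/-- the dual cone of `FW^n_k` (w.r.t. the trace inner product, within
symmetric matrices) is exactly the set of symmetric matrices all of whose `k × k`
principal submatrices are psd. -/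
-- quadratic form restriction
lemma quad_restrict {n : ℕ} (A : Matrix (Fin n) (Fin n) ℝ) (K : Finset (Fin n))
    (v : Fin n → ℝ) (hv : ∀ i, i ∉ K → v i = 0) :
    v ⬝ᵥ A.mulVec v =
      (fun i : K => v i) ⬝ᵥ (principalSub A K).mulVec (fun i : K => v i) := by
  have h1 : v ⬝ᵥ A.mulVec v = ∑ i ∈ K, v i * ∑ j ∈ K, A i j * v j := by
    rw [dotProduct]
    rw [← Finset.sum_subset (Finset.subset_univ K)]
    · refine Finset.sum_congr rfl fun i _ => ?_
      congr 1
      rw [mulVec, dotProduct]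
      rw [← Finset.sum_subset (Finset.subset_univ K)]
      intro j _ hj
      rw [hv j hj, mul_zero]
    · intro i _ hi
      rw [hv i hi, zero_mul]
  rw [h1, dotProduct, ← Finset.sum_coe_sort K (fun i => v i * ∑ j ∈ K, A i j * v j)]
  refine Finset.sum_congr rfl fun i _ => ?_
  congr 1
  rw [mulVec, dotProduct, ← Finset.sum_coe_sort K (fun j => A i j * v j)]
  rfl

lemma trace_VVt {n m : ℕ} (Y : Matrix (Fin n) (Fin n) ℝ) (V : Matrix (Fin n) (Fin m) ℝ) :
    (Y * (V * Vᵀ)ᵀ).trace = ∑ j, (fun i => V i j) ⬝ᵥ Y.mulVec (fun i => V i j) := by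
  rw [transpose_mul, transpose_transpose, ← Matrix.mul_assoc, Matrix.trace_mul_comm]
  simp only [trace, diag, mul_apply, transpose_apply, dotProduct, mulVec]

theorem stmt2 (n k : ℕ) (hk : 1 ≤ k) (hkn : k ≤ n) :
    dualSet (FW n k) = FWdual n k := by
  ext Y
  constructor
  · rintro ⟨hsym, hdual⟩
    refine ⟨hsym, fun K hK => ?_⟩
    rw [Matrix.posSemidef_iff_dotProduct_mulVec]
    constructor
    · rw [Matrix.IsHermitian, conjTranspose_eq_transpose_of_trivial]
      ext i j
      exact hsym.apply (i : Fin n) (j : Fin n)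
    · intro x
      classical
      set v : Fin n → ℝ := fun i => if h : i ∈ K then x ⟨i, h⟩ else 0 with hvdef
      have hv0 : ∀ i, i ∉ K → v i = 0 := fun i hi => dif_neg hi
      set V : Matrix (Fin n) (Fin 1) ℝ := Matrix.of fun i _ => v i with hV
      have hXpsd : (V * Vᵀ).PosSemidef := by
        have := Matrix.posSemidef_self_mul_conjTranspose V
        rwa [conjTranspose_eq_transpose_of_trivial] at this
      have hmem : V * Vᵀ ∈ FW n k := by
        refine ⟨hXpsd, 1, V, rfl, fun j => ?_⟩
        have hsub : {i | V i j ≠ 0} ⊆ (K : Set (Fin n)) := by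
          intro i hi
          by_contra hiK
          exact hi (hv0 i hiK)
        calc {i | V i j ≠ 0}.ncard ≤ (K : Set (Fin n)).ncard :=
              Set.ncard_le_ncard hsub (K : Set (Fin n)).toFinite
          _ = K.card := Set.ncard_coe_finset K
          _ = k := hK
      have h0 := hdual _ hmem
      rw [trace_VVt] at h0
      simp only [Finset.univ_unique, Finset.sum_singleton] at h0
      have hq : (fun i => V i (default : Fin 1)) ⬝ᵥ Y.mulVec (fun i => V i default) =
          x ⬝ᵥ (principalSub Y K).mulVec x := by
        have : (fun i => V i (default : Fin 1)) = v := rfl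
        rw [this, quad_restrict Y K v hv0]
        congr 1 <;> funext i <;> simp [hvdef]
      rw [hq] at h0
      simpa using h0
  · rintro ⟨hsym, hpsd⟩
    refine ⟨hsym, fun X hX => ?_⟩
    obtain ⟨hXpsd, m, V, rfl, hcols⟩ := hX
    rw [trace_VVt]
    refine Finset.sum_nonneg fun j _ => ?_
    classical
    set S : Finset (Fin n) := Finset.univ.filter (fun i => V i j ≠ 0) with hS
    have hScard : S.card ≤ k := by
      have : (S : Set (Fin n)) = {i | V i j ≠ 0} := by
        ext i; simp [hS]
      calc S.card = {i | V i j ≠ 0}.ncard := by rw [← Set.ncard_coe_finset S, this]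
        _ ≤ k := hcols j
    obtain ⟨K, hSK, -, hK⟩ := Finset.exists_subsuperset_card_eq S.subset_univ hScard
      (by simpa using hkn)
    have hv0 : ∀ i, i ∉ K → V i j = 0 := by
      intro i hi
      by_contra h
      exact hi (hSK (by simp [hS, h]))
    rw [quad_restrict Y K _ hv0]
    have := (hpsd K hK).dotProduct_mulVec_nonneg (fun i : K => V i j)
    simpa using this
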